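/- Let A ⊆ ℝ^d be a nonempty finite set of points and C a nonempty finite set of centers with Σ_{a∈A} d(a,C)² > 0. If a point p ∈ A is sampled with probability proportional to d(p,C)² (D²-weighting restricted to A), then E[φ_A(C ∪ {p})] ≤ 8·φ_A(μ_A). -/

import Mathlib

open scoped BigOperators

attribute [local instance] Classical.propDecidable

open RealInnerProductSpace in
/-- Lemma 3.2 of Arthur–Vassilvitskii: sampling p ∈ A by D²-weighting gives
    E[φ_A(C ∪ {p})] ≤ 8 φ_A(μ_A). -/
theorem dsq_sample_eight_approx (d : ℕ) (A C : Finset (EuclideanSpace ℝ (Fin d)))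
    (hA : A.Nonempty) (hC : C.Nonempty)
    (hpos : 0 < ∑ a ∈ A, Metric.infDist a (C : Set (EuclideanSpace ℝ (Fin d))) ^ 2) :
    ∑ p ∈ A,
      (Metric.infDist p (C : Set (EuclideanSpace ℝ (Fin d))) ^ 2
          / ∑ a ∈ A, Metric.infDist a (C : Set (EuclideanSpace ℝ (Fin d))) ^ 2)
        * ∑ a ∈ A, Metric.infDist a ((insert p C : Finset _) : Set (EuclideanSpace ℝ (Fin d))) ^ 2
      ≤ 8 * ∑ a ∈ A, ‖a - (A.card : ℝ)⁻¹ • ∑ x ∈ A, x‖ ^ 2 := by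
  classical
  set D : EuclideanSpace ℝ (Fin d) → ℝ :=
    fun x => Metric.infDist x (C : Set (EuclideanSpace ℝ (Fin d))) with hDdef
  set μ : EuclideanSpace ℝ (Fin d) := (A.card : ℝ)⁻¹ • ∑ x ∈ A, x with hμdef
  set Φ : ℝ := ∑ a ∈ A, D a ^ 2 with hΦdef
  set V : ℝ := ∑ a ∈ A, ‖a - μ‖ ^ 2 with hVdef
  set g : EuclideanSpace ℝ (Fin d) → ℝ := fun p =>
    ∑ a ∈ A, Metric.infDist a ((insert p C : Finset _) : Set (EuclideanSpace ℝ (Fin d))) ^ 2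
    with hgdef
  set S : EuclideanSpace ℝ (Fin d) → ℝ := fun p => ∑ a ∈ A, ‖a - p‖ ^ 2 with hSdef
  have hn : (0 : ℝ) < (A.card : ℝ) := by
    exact_mod_cast Finset.card_pos.mpr hA
  have hD0 : ∀ x, 0 ≤ D x := fun x => Metric.infDist_nonneg
  -- basic bounds on the inserted infDist
  have hm_le_dist : ∀ p a : EuclideanSpace ℝ (Fin d),
      Metric.infDist a ((insert p C : Finset _) : Set (EuclideanSpace ℝ (Fin d))) ≤ ‖a - p‖ := by
    intro p a
    have hp : p ∈ ((insert p C : Finset _) : Set (EuclideanSpace ℝ (Fin d))) := by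
      simp
    simpa [dist_eq_norm] using Metric.infDist_le_dist_of_mem hp
  have hm_le_D : ∀ p a : EuclideanSpace ℝ (Fin d),
      Metric.infDist a ((insert p C : Finset _) : Set (EuclideanSpace ℝ (Fin d))) ≤ D a := by
    intro p a
    apply Metric.infDist_le_infDist_of_subset
    · intro x hx; simp only [Finset.coe_insert, Set.mem_insert_iff]; exact Or.inr hx
    · exact_mod_cast hC
  have hm0 : ∀ p a : EuclideanSpace ℝ (Fin d),
      0 ≤ Metric.infDist a ((insert p C : Finset _) : Set (EuclideanSpace ℝ (Fin d))) :=
    fun _ _ => Metric.infDist_nonneg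
  have hgS : ∀ p, g p ≤ S p := by
    intro p
    apply Finset.sum_le_sum
    intro a _
    exact pow_le_pow_left₀ (hm0 p a) (hm_le_dist p a) 2
  have hgΦ : ∀ p, g p ≤ Φ := by
    intro p
    apply Finset.sum_le_sum
    intro a _
    exact pow_le_pow_left₀ (hm0 p a) (hm_le_D p a) 2
  have hg0 : ∀ p, 0 ≤ g p := by
    intro p
    exact Finset.sum_nonneg fun a _ => sq_nonneg _
  have hS0 : ∀ p, 0 ≤ S p := fun p => Finset.sum_nonneg fun a _ => sq_nonneg _
  have hΦ0 : (0 : ℝ) ≤ Φ := le_of_lt hpos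
  -- triangle inequality squared, averaged
  have htri : ∀ p a : EuclideanSpace ℝ (Fin d), D p ≤ D a + ‖a - p‖ := by
    intro p a
    have := Metric.infDist_le_infDist_add_dist
      (x := p) (y := a) (s := (C : Set (EuclideanSpace ℝ (Fin d))))
    simpa [dist_eq_norm, norm_sub_rev a p] using this
  have hDp : ∀ p, (A.card : ℝ) * D p ^ 2 ≤ 2 * Φ + 2 * S p := by
    intro p
    have h1 : ∑ a ∈ A, D p ^ 2 ≤ ∑ a ∈ A, (2 * D a ^ 2 + 2 * ‖a - p‖ ^ 2) := by
      apply Finset.sum_le_sum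
      intro a _
      nlinarith [htri p a, hD0 p, hD0 a, norm_nonneg (a - p), sq_nonneg (D a - ‖a - p‖),
        mul_self_le_mul_self (hD0 p) (htri p a)]
    have h2 : ∑ a ∈ A, D p ^ 2 = (A.card : ℝ) * D p ^ 2 := by
      simp [Finset.sum_const, mul_comm]
    have h3 : ∑ a ∈ A, (2 * D a ^ 2 + 2 * ‖a - p‖ ^ 2) = 2 * Φ + 2 * S p := by
      rw [Finset.sum_add_distrib, ← Finset.mul_sum, ← Finset.mul_sum]
    linarith [h1, h2.symm ▸ h1]
  have hmain : ∀ p, (A.card : ℝ) * (D p ^ 2 * g p) ≤ 4 * (Φ * S p) := by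
    intro p
    have h1 : (A.card : ℝ) * D p ^ 2 * g p ≤ (2 * Φ + 2 * S p) * g p :=
      mul_le_mul_of_nonneg_right (hDp p) (hg0 p)
    nlinarith [mul_le_mul_of_nonneg_left (hgS p) hΦ0,
      mul_le_mul_of_nonneg_left (hgΦ p) (hS0 p)]
  -- bias-variance
  have hcent : ∑ a ∈ A, (a - μ) = 0 := by
    rw [Finset.sum_sub_distrib, Finset.sum_const, ← Nat.cast_smul_eq_nsmul ℝ, hμdef,
      smul_inv_smul₀ (ne_of_gt hn), sub_self]
  have hz : ∀ z : EuclideanSpace ℝ (Fin d),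
      S z = V + (A.card : ℝ) * ‖z - μ‖ ^ 2 := by
    intro z
    have hterm : ∀ a : EuclideanSpace ℝ (Fin d),
        ‖a - z‖ ^ 2 = ‖a - μ‖ ^ 2 - 2 * ⟪a - μ, z - μ⟫ + ‖z - μ‖ ^ 2 := by
      intro a
      have h : a - z = (a - μ) - (z - μ) := by abel
      rw [h, norm_sub_sq_real]
    calc S z = ∑ a ∈ A, (‖a - μ‖ ^ 2 - 2 * ⟪a - μ, z - μ⟫ + ‖z - μ‖ ^ 2) := by
          apply Finset.sum_congr rfl; intro a _; exact hterm a
      _ = V - 2 * ⟪∑ a ∈ A, (a - μ), z - μ⟫ + (A.card : ℝ) * ‖z - μ‖ ^ 2 := by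
          rw [Finset.sum_add_distrib, Finset.sum_sub_distrib, sum_inner, Finset.mul_sum,
            Finset.sum_const]
          simp [Finset.mul_sum, mul_comm]
          exact hVdef.symm
      _ = V + (A.card : ℝ) * ‖z - μ‖ ^ 2 := by
          rw [hcent, inner_zero_left]; ring
  have hSsum : ∑ p ∈ A, S p = 2 * (A.card : ℝ) * V := by
    calc ∑ p ∈ A, S p = ∑ p ∈ A, (V + (A.card : ℝ) * ‖p - μ‖ ^ 2) := by
          apply Finset.sum_congr rfl; intro p _; exact hz p
      _ = (A.card : ℝ) * V + (A.card : ℝ) * V := by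
          rw [Finset.sum_add_distrib, Finset.sum_const, nsmul_eq_mul, ← Finset.mul_sum,
            ← hVdef]
      _ = 2 * (A.card : ℝ) * V := by ring
  -- assemble
  have hsum : (A.card : ℝ) * ∑ p ∈ A, D p ^ 2 * g p ≤ (A.card : ℝ) * (8 * V * Φ) := by
    calc (A.card : ℝ) * ∑ p ∈ A, D p ^ 2 * g p
        = ∑ p ∈ A, (A.card : ℝ) * (D p ^ 2 * g p) := by rw [Finset.mul_sum]
      _ ≤ ∑ p ∈ A, 4 * (Φ * S p) := Finset.sum_le_sum fun p _ => hmain p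
      _ = 4 * (Φ * ∑ p ∈ A, S p) := by
          rw [← Finset.mul_sum, ← Finset.mul_sum]
      _ = (A.card : ℝ) * (8 * V * Φ) := by rw [hSsum]; ring
  have hkey : ∑ p ∈ A, D p ^ 2 * g p ≤ 8 * V * Φ :=
    le_of_mul_le_mul_left (by simpa using hsum) hn
  have hfin : ∑ p ∈ A, D p ^ 2 / Φ * g p ≤ 8 * V := by
    have : ∑ p ∈ A, D p ^ 2 / Φ * g p = (∑ p ∈ A, D p ^ 2 * g p) / Φ := by
      rw [Finset.sum_div]
      apply Finset.sum_congr rfl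
      intro p _
      ring
    rw [this, div_le_iff₀ hpos]
    linarith
  exact hfin
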